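/- Let M be a commutative refinement monoid generated by two elements x and y such that x ∉ add(y) and y ∉ add(x) (i.e., no positive multiple of one element has the other as a summand). If n₁·x + m₁·y = n₂·x + m₂·y with n₁, n₂, m₁, m₂ nonzero positive integers, then n₁·x = n₂·x and m₁·y = m₂·y. -/
import Mathlib


/-- add(a) = the set of summands of positive finite multiples of a. -/
def addCl {M : Type*} [AddCommMonoid M] (a : M) : Set M :=
  {u | ∃ z : M, ∃ t : ℕ, 1 ≤ t ∧ u + z = t • a}

/-- in a refinement monoid generated by x, y with x ∉ add(y) and
y ∉ add(x), the relation n₁•x + m₁•y = n₂•x + m₂•y (all coefficients positive)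
forces n₁•x = n₂•x and m₁•y = m₂•y. -/
theorem refinement_type1_split {M : Type*} [AddCommMonoid M]
    (href : ∀ a b c d : M, a + b = c + d →
      ∃ e f g h : M, a = e + f ∧ b = g + h ∧ c = e + g ∧ d = f + h)
    (x y : M) (hgen : ∀ m : M, ∃ a b : ℕ, m = a • x + b • y)
    (hx : x ∉ addCl y) (hy : y ∉ addCl x)
    (n₁ n₂ m₁ m₂ : ℕ) (hn₁ : 1 ≤ n₁) (hn₂ : 1 ≤ n₂) (hm₁ : 1 ≤ m₁) (hm₂ : 1 ≤ m₂)
    (heq : n₁ • x + m₁ • y = n₂ • x + m₂ • y) :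
    n₁ • x = n₂ • x ∧ m₁ • y = m₂ • y := by
  obtain ⟨e, f, g, h, h1, h2, h3, h4⟩ := href _ _ _ _ heq
  obtain ⟨a, b, hf⟩ := hgen f
  obtain ⟨c, d, hg⟩ := hgen g
  have split : ∀ k : ℕ, 1 ≤ k → k • x = x + (k - 1) • x := by
    intro k hk
    obtain ⟨k', rfl⟩ := Nat.exists_eq_add_of_le hk
    simp [add_nsmul]
  have splity : ∀ k : ℕ, 1 ≤ k → k • y = y + (k - 1) • y := by
    intro k hk
    obtain ⟨k', rfl⟩ := Nat.exists_eq_add_of_le hk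
    simp [add_nsmul]
  have ha : a = 0 := by
    by_contra ha
    apply hx
    refine ⟨(a - 1) • x + b • y + h, m₂, hm₂, ?_⟩
    rw [h4, hf, split a (by omega)]
    abel
  have hb : b = 0 := by
    by_contra hb
    apply hy
    refine ⟨(b - 1) • y + e, n₁, hn₁, ?_⟩
    rw [h1, hf, ha, splity b (by omega), zero_nsmul, zero_add]
    abel
  have hf0 : f = 0 := by simp [hf, ha, hb]
  have hc : c = 0 := by
    by_contra hc
    apply hx
    refine ⟨(c - 1) • x + d • y + h, m₁, hm₁, ?_⟩
    rw [h2, hg, split c (by omega)]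
    abel
  have hd : d = 0 := by
    by_contra hd
    apply hy
    refine ⟨(d - 1) • y + e, n₂, hn₂, ?_⟩
    rw [h3, hg, hc, splity d (by omega), zero_nsmul, zero_add]
    abel
  have hg0 : g = 0 := by simp [hg, hc, hd]
  constructor
  · rw [h1, h3, hf0, hg0]
  · rw [h2, h4, hf0, hg0, add_comm]
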